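/- Let Σ be a finite alphabet of size q ≥ 2, n ≥ 1, δ ∈ (0,1), and set α = (1 − 1/q)(1 + δ). Let (K, Enc, Dec) be a finitary messageless secret-key code over Σ with codeword length n satisfying the relaxed average soundness condition P_{sk, Û}[Dec(sk, Û) ≠ invalid] ≤ ε, where Û is uniform on Σ^n independent of sk and ε ∈ [0,1]. Let f be the truncated uniform resampler with budget αn applied to γ = Enc(sk). Then the tamper-detection failure probability satisfies P[Dec(sk, f(γ)) ≠ tampered ∧ f(γ) ≠ γ] ≥ 1 − ε − q^{−n} − exp(−δ²(1 − 1/q)n/3). -/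

import Mathlib

open Finset Classical

/-- Decoding outcomes of a messageless secret-key code. -/
inductive DecOut where
  | valid
  | invalid
  | tampered
deriving DecidableEq

/-- The truncated uniform resampler with budget `b`: on codeword `γ` and uniform
randomness `u`, it outputs `u` if `dist(u, γ) ≤ b` and `γ` otherwise. -/
noncomputable def resample {S : Type} [Fintype S] [DecidableEq S] {n : ℕ}
    (b : ℝ) (γ u : Fin n → S) : Fin n → S :=
  if (hammingDist u γ : ℝ) ≤ b then u else γ

private lemma exp_cubic {z : ℝ} (h0 : 0 ≤ z) (h1 : z ≤ 1) :
    Real.exp z ≤ 1 + z + z ^ 2 / 2 + 2 / 9 * z ^ 3 := by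
  have h := Real.exp_bound' h0 h1 (n := 3) (by norm_num)
  have hs : (∑ m ∈ Finset.range 3, z ^ m / m.factorial) = 1 + z + z ^ 2 / 2 := by
    norm_num [Finset.sum_range_succ, Nat.factorial]
  rw [hs] at h
  calc Real.exp z ≤ 1 + z + z ^ 2 / 2 + z ^ 3 * (3 + 1) / ((3:ℕ).factorial * 3) := h
    _ = 1 + z + z ^ 2 / 2 + 2 / 9 * z ^ 3 := by norm_num [Nat.factorial]; ring

private lemma log_lb {δ : ℝ} (h0 : 0 < δ) (h1 : δ ≤ 1) :
    δ + δ ^ 2 / 3 ≤ (1 + δ) * Real.log (1 + δ) := by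
  have h1δ : (0:ℝ) < 1 + δ := by linarith
  set z : ℝ := (δ + δ ^ 2 / 3) / (1 + δ) with hzdef
  have hz_rel : z * (1 + δ) = δ + δ ^ 2 / 3 := by
    rw [hzdef]; field_simp
  have hz0 : 0 ≤ z := by positivity
  have hzδ : z ≤ δ := by
    rw [hzdef, div_le_iff₀ h1δ]; nlinarith
  have hz1 : z ≤ 1 := hzδ.trans h1
  have hcube : z + z ^ 2 / 2 + 2 / 9 * z ^ 3 ≤ δ := by
    have hpow : (0:ℝ) < (1 + δ) ^ 3 := by positivity
    rw [← mul_le_mul_iff_of_pos_right hpow]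
    have expand : (z + z ^ 2 / 2 + 2 / 9 * z ^ 3) * (1 + δ) ^ 3
        = (δ + δ ^ 2 / 3) * (1 + δ) ^ 2 + (δ + δ ^ 2 / 3) ^ 2 * (1 + δ) / 2
          + 2 / 9 * (δ + δ ^ 2 / 3) ^ 3 := by
      linear_combination ((1 + δ) ^ 2 + (z * (1 + δ) + (δ + δ ^ 2 / 3)) * (1 + δ) / 2
        + 2 / 9 * ((z * (1 + δ)) ^ 2 + z * (1 + δ) * (δ + δ ^ 2 / 3)
          + (δ + δ ^ 2 / 3) ^ 2)) * hz_rel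
    rw [expand]
    nlinarith [sq_nonneg δ, mul_nonneg (mul_nonneg h0.le h0.le) (sub_nonneg.2 h1),
      mul_nonneg (mul_nonneg (mul_nonneg h0.le h0.le) h0.le) (sub_nonneg.2 h1),
      mul_nonneg (mul_nonneg (mul_nonneg (mul_nonneg h0.le h0.le) h0.le) h0.le) (sub_nonneg.2 h1)]
  have hexp : Real.exp z ≤ 1 + δ := by
    have := exp_cubic hz0 hz1
    linarith
  have hlog : z ≤ Real.log (1 + δ) := (Real.le_log_iff_exp_le h1δ).2 hexp
  calc δ + δ ^ 2 / 3 = z * (1 + δ) := hz_rel.symm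
    _ ≤ Real.log (1 + δ) * (1 + δ) := by
        apply mul_le_mul_of_nonneg_right hlog h1δ.le
    _ = (1 + δ) * Real.log (1 + δ) := by ring

private lemma far_count {S : Type} [Fintype S] [DecidableEq S] {n : ℕ}
    (γ : Fin n → S) (hq : 2 ≤ Fintype.card S) {δ : ℝ} (hδ0 : 0 < δ) (hδ1 : δ ≤ 1) :
    ∑ u : Fin n → S,
      (if ¬ ((hammingDist u γ : ℝ) ≤ (1 - (Fintype.card S : ℝ)⁻¹) * (1 + δ) * n)
       then ((Fintype.card S : ℝ) ^ n)⁻¹ else 0)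
    ≤ Real.exp (-(δ ^ 2 * (1 - (Fintype.card S : ℝ)⁻¹) * n / 3)) := by
  classical
  set q : ℝ := (Fintype.card S : ℝ) with hqdef
  have hq2 : (2:ℝ) ≤ q := by rw [hqdef]; exact_mod_cast hq
  have hq0 : (0:ℝ) < q := by linarith
  set p : ℝ := 1 - q⁻¹ with hpdef
  have hp0 : 0 ≤ p := by
    have : q⁻¹ ≤ 1 := by
      rw [inv_le_one_iff₀]; right; linarith
    simp [hpdef]; linarith
  set b : ℝ := p * (1 + δ) * n with hbdef
  set t : ℝ := Real.log (1 + δ) with htdef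
  have h1δ : (0:ℝ) < 1 + δ := by linarith
  have het : Real.exp t = 1 + δ := Real.exp_log h1δ
  have ht0 : 0 < t := Real.log_pos (by linarith)
  -- pointwise bound
  have hpt : ∀ u : Fin n → S,
      (if ¬ ((hammingDist u γ : ℝ) ≤ b) then (q ^ n)⁻¹ else 0)
      ≤ (q ^ n)⁻¹ * Real.exp (t * (hammingDist u γ : ℝ) - t * b) := by
    intro u
    by_cases h : (hammingDist u γ : ℝ) ≤ b
    · rw [if_neg (not_not_intro h)]
      positivity
    · rw [if_pos h]
      push_neg at h
      have hle : (0:ℝ) ≤ t * (hammingDist u γ : ℝ) - t * b := by nlinarith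
      have h1 : (1:ℝ) ≤ Real.exp (t * (hammingDist u γ : ℝ) - t * b) :=
        Real.one_le_exp hle
      have hQ : (0:ℝ) < (q ^ n)⁻¹ := by positivity
      nlinarith
  -- MGF computation
  have hmgf : ∑ u : Fin n → S, Real.exp (t * (hammingDist u γ : ℝ))
      = (1 + (q - 1) * Real.exp t) ^ n := by
    have hrw : ∀ u : Fin n → S, Real.exp (t * (hammingDist u γ : ℝ))
        = ∏ i, (if u i = γ i then (1:ℝ) else Real.exp t) := by
      intro u
      have hd : (hammingDist u γ : ℝ) = ∑ i, (if u i = γ i then (0:ℝ) else 1) := by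
        rw [hammingDist, Finset.natCast_card_filter]
        push_cast
        refine Finset.sum_congr rfl fun i _ => ?_
        by_cases h : u i = γ i <;> simp [h]
      rw [hd, Finset.mul_sum, Real.exp_sum]
      refine Finset.prod_congr rfl fun i _ => ?_
      by_cases h : u i = γ i <;> simp [h]
    simp_rw [hrw]
    rw [← Fintype.prod_sum (fun (i : Fin n) (s : S) => if s = γ i then (1:ℝ) else Real.exp t)]
    have hin : ∀ i : Fin n, (∑ s : S, if s = γ i then (1:ℝ) else Real.exp t)
        = 1 + (q - 1) * Real.exp t := by
      intro i
      have : ∀ s : S, (if s = γ i then (1:ℝ) else Real.exp t)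
          = (if s = γ i then 1 - Real.exp t else 0) + Real.exp t := by
        intro s; split_ifs <;> ring
      simp_rw [this]
      rw [Finset.sum_add_distrib, Finset.sum_ite_eq' Finset.univ (γ i)
        (fun _ => (1:ℝ) - Real.exp t), Finset.sum_const, Finset.card_univ]
      simp [hqdef]
      ring
    rw [Finset.prod_congr rfl fun i _ => hin i, Finset.prod_const, Finset.card_univ,
      Fintype.card_fin]
  calc ∑ u : Fin n → S, (if ¬ ((hammingDist u γ : ℝ) ≤ b) then (q ^ n)⁻¹ else 0)
      ≤ ∑ u : Fin n → S, (q ^ n)⁻¹ * Real.exp (t * (hammingDist u γ : ℝ) - t * b) :=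
        Finset.sum_le_sum fun u _ => hpt u
    _ = (q ^ n)⁻¹ * (Real.exp (t * b))⁻¹ * ∑ u : Fin n → S,
          Real.exp (t * (hammingDist u γ : ℝ)) := by
        rw [Finset.mul_sum]
        refine Finset.sum_congr rfl fun u _ => ?_
        rw [Real.exp_sub, div_eq_mul_inv]
        ring
    _ = (q ^ n)⁻¹ * (Real.exp (t * b))⁻¹ * (1 + (q - 1) * Real.exp t) ^ n := by rw [hmgf]
    _ = (1 + p * δ) ^ n * (Real.exp (t * b))⁻¹ := by
        have h1 : 1 + (q - 1) * Real.exp t = q * (1 + p * δ) := by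
          rw [het, hpdef]; field_simp; ring
        rw [h1, mul_pow]
        field_simp
    _ ≤ Real.exp (p * δ * n) * (Real.exp (t * b))⁻¹ := by
        have h1 : (0:ℝ) ≤ 1 + p * δ := by positivity
        have h2 : 1 + p * δ ≤ Real.exp (p * δ) := by
          have := Real.add_one_le_exp (p * δ); linarith
        have h3 : (1 + p * δ) ^ n ≤ Real.exp (p * δ) ^ n := pow_le_pow_left₀ h1 h2 n
        rw [← Real.exp_nat_mul] at h3
        have h4 : Real.exp ((n : ℝ) * (p * δ)) = Real.exp (p * δ * n) := by ring_nf
        rw [h4] at h3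
        have h5 : (0:ℝ) ≤ (Real.exp (t * b))⁻¹ := by positivity
        exact mul_le_mul_of_nonneg_right h3 h5
    _ = Real.exp (p * δ * n - t * b) := by rw [← Real.exp_neg, ← Real.exp_add]; ring_nf
    _ ≤ Real.exp (-(δ ^ 2 * p * n / 3)) := by
        apply Real.exp_le_exp.2
        have hlb := log_lb hδ0 hδ1
        have hn0 : (0:ℝ) ≤ (n : ℝ) := Nat.cast_nonneg n
        have : t * b = p * (n : ℝ) * ((1 + δ) * Real.log (1 + δ)) := by
          rw [htdef, hbdef]; ring
        rw [this]
        have hpn : 0 ≤ p * (n : ℝ) := mul_nonneg hp0 hn0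
        nlinarith [mul_le_mul_of_nonneg_left hlb hpn]

/-- Relaxed (average) soundness: if
`P_{sk,Û}[Dec(sk, Û) ≠ invalid] ≤ ε` for a uniform `Û` independent of `sk`, then for
`δ ∈ (0,1)` and `α = (1 - 1/q)(1 + δ)`, the tamper-detection failure against the
truncated uniform resampler with budget `α·n` is at least
`1 - ε - q^(-n) - exp(-δ²(1 - 1/q)n/3)`. -/
theorem stmt_5
    {S K : Type} [Fintype S] [DecidableEq S] [Fintype K] [Nonempty K]
    {n : ℕ} (hn : 1 ≤ n) (hq : 2 ≤ Fintype.card S)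
    (δ : ℝ) (hδ0 : 0 < δ) (hδ1 : δ < 1)
    (w : K → ℝ) (hw0 : ∀ k, 0 ≤ w k) (hw1 : ∑ k, w k = 1)
    (Enc : K → Fin n → S) (Dec : K → (Fin n → S) → DecOut)
    (ε : ℝ) (hε0 : 0 ≤ ε) (hε1 : ε ≤ 1)
    (havgsound :
      (∑ k, ∑ u : Fin n → S,
        if Dec k u ≠ DecOut.invalid
        then w k * ((Fintype.card S : ℝ) ^ n)⁻¹ else 0) ≤ ε) :
    1 - ε - ((Fintype.card S : ℝ) ^ n)⁻¹
      - Real.exp (-(δ ^ 2 * (1 - (Fintype.card S : ℝ)⁻¹) * n / 3))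
    ≤ (∑ k, ∑ u : Fin n → S,
        if Dec k (resample ((1 - (Fintype.card S : ℝ)⁻¹) * (1 + δ) * n) (Enc k) u)
              ≠ DecOut.tampered
           ∧ resample ((1 - (Fintype.card S : ℝ)⁻¹) * (1 + δ) * n) (Enc k) u ≠ Enc k
        then w k * ((Fintype.card S : ℝ) ^ n)⁻¹ else 0) := by
  classical
  have hq2 : (2:ℝ) ≤ (Fintype.card S : ℝ) := by exact_mod_cast hq
  have hq0 : (0:ℝ) < (Fintype.card S : ℝ) := by linarith
  have hQ0 : (0:ℝ) < ((Fintype.card S : ℝ)) ^ n := by positivity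
  set q : ℝ := (Fintype.card S : ℝ) with hqdef
  set b : ℝ := (1 - q⁻¹) * (1 + δ) * n with hbdef
  -- pointwise key inequality
  have key : ∀ (k : K) (u : Fin n → S),
      w k * (q ^ n)⁻¹
        - (if Dec k u ≠ DecOut.invalid then w k * (q ^ n)⁻¹ else 0)
        - (if ¬ ((hammingDist u (Enc k) : ℝ) ≤ b) then w k * (q ^ n)⁻¹ else 0)
        - (if u = Enc k then w k * (q ^ n)⁻¹ else 0)
      ≤ (if Dec k (resample b (Enc k) u) ≠ DecOut.tampered
            ∧ resample b (Enc k) u ≠ Enc k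
         then w k * (q ^ n)⁻¹ else 0) := by
    intro k u
    have hc : 0 ≤ w k * (q ^ n)⁻¹ := mul_nonneg (hw0 k) (by positivity)
    by_cases h1 : Dec k u ≠ DecOut.invalid
    · rw [if_pos h1]
      split_ifs <;> linarith
    · by_cases h2 : ¬ ((hammingDist u (Enc k) : ℝ) ≤ b)
      · rw [if_neg h1, if_pos h2]
        split_ifs <;> linarith
      · by_cases h3 : u = Enc k
        · rw [if_neg h1, if_neg h2, if_pos h3]
          split_ifs <;> linarith
        · have hres : resample b (Enc k) u = u := by
            rw [resample, if_pos (not_not.mp h2)]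
          have hbad : Dec k (resample b (Enc k) u) ≠ DecOut.tampered
              ∧ resample b (Enc k) u ≠ Enc k := by
            rw [hres]
            refine ⟨?_, h3⟩
            rw [not_not.mp h1]
            exact fun hcontra => DecOut.noConfusion hcontra
          rw [if_neg h1, if_neg h2, if_neg h3, if_pos hbad]
          linarith
  have hsum : ∑ k, ∑ u : Fin n → S,
      (w k * (q ^ n)⁻¹
        - (if Dec k u ≠ DecOut.invalid then w k * (q ^ n)⁻¹ else 0)
        - (if ¬ ((hammingDist u (Enc k) : ℝ) ≤ b) then w k * (q ^ n)⁻¹ else 0)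
        - (if u = Enc k then w k * (q ^ n)⁻¹ else 0))
      ≤ ∑ k, ∑ u : Fin n → S,
        (if Dec k (resample b (Enc k) u) ≠ DecOut.tampered
            ∧ resample b (Enc k) u ≠ Enc k
         then w k * (q ^ n)⁻¹ else 0) :=
    Finset.sum_le_sum fun k _ => Finset.sum_le_sum fun u _ => key k u
  refine le_trans ?_ hsum
  -- split the sums
  have hsplit : ∑ k, ∑ u : Fin n → S,
      (w k * (q ^ n)⁻¹
        - (if Dec k u ≠ DecOut.invalid then w k * (q ^ n)⁻¹ else 0)
        - (if ¬ ((hammingDist u (Enc k) : ℝ) ≤ b) then w k * (q ^ n)⁻¹ else 0)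
        - (if u = Enc k then w k * (q ^ n)⁻¹ else 0))
      = (∑ k, ∑ _u : Fin n → S, w k * (q ^ n)⁻¹)
        - (∑ k, ∑ u : Fin n → S,
            if Dec k u ≠ DecOut.invalid then w k * (q ^ n)⁻¹ else 0)
        - (∑ k, ∑ u : Fin n → S,
            if ¬ ((hammingDist u (Enc k) : ℝ) ≤ b) then w k * (q ^ n)⁻¹ else 0)
        - (∑ k, ∑ u : Fin n → S,
            if u = Enc k then w k * (q ^ n)⁻¹ else 0) := by
    simp_rw [Finset.sum_sub_distrib]
  rw [hsplit]
  have hcard : ((Fintype.card (Fin n → S) : ℝ)) = q ^ n := by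
    rw [Fintype.card_fun, Fintype.card_fin]
    push_cast
    rw [hqdef]
  have hS1 : (∑ k, ∑ _u : Fin n → S, w k * (q ^ n)⁻¹) = 1 := by
    have h1 : ∀ k : K, (∑ _u : Fin n → S, w k * (q ^ n)⁻¹) = w k := by
      intro k
      rw [Finset.sum_const, Finset.card_univ, nsmul_eq_mul, hcard]
      field_simp
    simp_rw [h1]
    exact hw1
  have hS4 : (∑ k, ∑ u : Fin n → S, if u = Enc k then w k * (q ^ n)⁻¹ else 0)
      = (q ^ n)⁻¹ := by
    have h1 : ∀ k : K, (∑ u : Fin n → S, if u = Enc k then w k * (q ^ n)⁻¹ else 0)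
        = w k * (q ^ n)⁻¹ := by
      intro k
      rw [Finset.sum_ite_eq' Finset.univ (Enc k) (fun _ => w k * (q ^ n)⁻¹)]
      simp
    simp_rw [h1]
    rw [← Finset.sum_mul, hw1, one_mul]
  have hS3 : (∑ k, ∑ u : Fin n → S,
      if ¬ ((hammingDist u (Enc k) : ℝ) ≤ b) then w k * (q ^ n)⁻¹ else 0)
      ≤ Real.exp (-(δ ^ 2 * (1 - q⁻¹) * n / 3)) := by
    have h1 : ∀ k : K, (∑ u : Fin n → S,
        if ¬ ((hammingDist u (Enc k) : ℝ) ≤ b) then w k * (q ^ n)⁻¹ else 0)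
        ≤ w k * Real.exp (-(δ ^ 2 * (1 - q⁻¹) * n / 3)) := by
      intro k
      have h2 : ∀ u : Fin n → S,
          (if ¬ ((hammingDist u (Enc k) : ℝ) ≤ b) then w k * (q ^ n)⁻¹ else 0)
          = w k * (if ¬ ((hammingDist u (Enc k) : ℝ) ≤ b) then (q ^ n)⁻¹ else 0) := by
        intro u; split_ifs <;> simp
      simp_rw [h2]
      rw [← Finset.mul_sum]
      have hfc := far_count (Enc k) hq hδ0 hδ1.le
      rw [← hqdef] at hfc
      exact mul_le_mul_of_nonneg_left hfc (hw0 k)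
    calc _ ≤ ∑ k, w k * Real.exp (-(δ ^ 2 * (1 - q⁻¹) * n / 3)) :=
          Finset.sum_le_sum fun k _ => h1 k
      _ = Real.exp (-(δ ^ 2 * (1 - q⁻¹) * n / 3)) := by
          rw [← Finset.sum_mul, hw1, one_mul]
  rw [hS1, hS4]
  have := havgsound
  linarith [hS3, this]
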